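/- The Legendre conjugate of the Sinkhorn negentropy has the closed variational form: for every f ∈ ℝ^d, max_{α ∈ △^d} (⟨α, f⟩ − Ω_C(α)) = −log min_{α ∈ △^d} Φ_C(α, f), where Φ_C(α,f) = Σ_{i,j=1}^d α_i α_j exp(−(f_i + f_j + c_{ij})/2). -/

import Mathlib

open Finset Real Filter

noncomputable section

/-- The probability simplex in `ℝ^d`. -/
def simplexS (d : ℕ) : Set (Fin d → ℝ) := stdSimplex ℝ (Fin d)

/-- Transport plans between `α` and `β`: nonnegative matrices with prescribed marginals,
supported where `α i * β j > 0`. -/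
def couplings {d : ℕ} (α β : Fin d → ℝ) : Set (Matrix (Fin d) (Fin d) ℝ) :=
  {p | (∀ i j, 0 ≤ p i j) ∧ (∀ i, ∑ j, p i j = α i) ∧ (∀ j, ∑ i, p i j = β j) ∧
    ∀ i j, α i * β j = 0 → p i j = 0}

/-- The entropy-regularized transport cost of a plan `p` (with the convention `0 log 0 = 0`,
which holds automatically since `Real.log 0 = 0`). -/
def OTcost {d : ℕ} (C : Matrix (Fin d) (Fin d) ℝ) (ε : ℝ) (α β : Fin d → ℝ)
    (p : Matrix (Fin d) (Fin d) ℝ) : ℝ :=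
  (∑ i, ∑ j, p i j * C i j) + ε * ∑ i, ∑ j, p i j * Real.log (p i j / (α i * β j))

/-- Entropy-regularized optimal transport cost `OT_{C,ε}(α,β)`. -/
def OT {d : ℕ} (C : Matrix (Fin d) (Fin d) ℝ) (ε : ℝ) (α β : Fin d → ℝ) : ℝ :=
  sInf (OTcost C ε α β '' couplings α β)

/-- The Sinkhorn negentropy `Ω_C(α) = -(1/2) OT_{C,2}(α,α)`. -/
def Omega {d : ℕ} (C : Matrix (Fin d) (Fin d) ℝ) (α : Fin d → ℝ) : ℝ :=
  -(1 / 2) * OT C 2 α α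

open scoped Classical

/-- `Φ_C(α,f) = Σ_{i,j} α_i α_j exp(-(f_i + f_j + c_{ij})/2)`. -/
def Phi {d : ℕ} (C : Matrix (Fin d) (Fin d) ℝ) (α f : Fin d → ℝ) : ℝ :=
  ∑ i, ∑ j, α i * α j * Real.exp (-(f i + f j + C i j) / 2)

/-- The geometric log-sum-exp `Ω_C^*(f) = -log min_{α ∈ △^d} Φ_C(α, f)`. -/
def OmegaStar {d : ℕ} (C : Matrix (Fin d) (Fin d) ℝ) (f : Fin d → ℝ) : ℝ :=
  -Real.log (sInf ((fun α => Phi C α f) '' simplexS d))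

/-- The geometric softmax: the (unique, when the kernel is positive definite) minimizer of
`Φ_C(·, f)` over the simplex. -/
def gsoftmax {d : ℕ} (C : Matrix (Fin d) (Fin d) ℝ) (f : Fin d → ℝ) : Fin d → ℝ :=
  if h : ∃ α ∈ simplexS d, IsMinOn (fun β => Phi C β f) (simplexS d) α
  then h.choose else fun _ => 0

/-- The soft C-transform `T(f,α)_i = -2 log Σ_j α_j exp((f_j - c_{ij})/2)`. -/
def Tsoft {d : ℕ} (C : Matrix (Fin d) (Fin d) ℝ) (f α : Fin d → ℝ) : Fin d → ℝ :=
  fun i => -2 * Real.log (∑ j, α j * Real.exp ((f j - C i j) / 2))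

/-- `f` is the symmetric Sinkhorn potential of `α`: `-f = T(-f, α)`. -/
def IsSinkhornPotential {d : ℕ} (C : Matrix (Fin d) (Fin d) ℝ) (α f : Fin d → ℝ) : Prop :=
  -f = Tsoft C (-f) α

/-- The symmetric Sinkhorn potential `∇Ω(α)`: the (unique, when the kernel is positive
definite) `f` with `-f = T(-f, α)`. -/
def gradOmega {d : ℕ} (C : Matrix (Fin d) (Fin d) ℝ) (α : Fin d → ℝ) : Fin d → ℝ :=
  if h : ∃ f : Fin d → ℝ, IsSinkhornPotential C α f then h.choose else fun _ => 0

/-- The extrapolation `f^E = -T(-(f - Ω_C^*(f)·1), g-softmax(f)) + Ω_C^*(f)·1`. -/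
def extrap {d : ℕ} (C : Matrix (Fin d) (Fin d) ℝ) (f : Fin d → ℝ) : Fin d → ℝ :=
  fun i => -(Tsoft C (fun j => -(f j - OmegaStar C f)) (gsoftmax C f) i) + OmegaStar C f

/-- The kernel matrix `K = (exp(-c_{ij}/2))_{ij}`. -/
def kernelK {d : ℕ} (C : Matrix (Fin d) (Fin d) ℝ) : Matrix (Fin d) (Fin d) ℝ :=
  Matrix.of fun i j => Real.exp (-(C i j) / 2)

/-- Auxiliary: existence of the symmetric Sinkhorn scaling. -/
lemma sinkhorn_exists {d : ℕ} (C : Matrix (Fin d) (Fin d) ℝ)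
    (hCsym : C.IsSymm) (hCdiag : ∀ i, C i i = 0) (α : Fin d → ℝ)
    (h0 : ∀ i, 0 ≤ α i) (h1 : ∑ i, α i = 1) :
    ∃ x : Fin d → ℝ, (∀ i, 0 ≤ x i) ∧
      ∀ i, x i * (∑ j, Real.exp (-C i j / 2) * x j) = α i := by
  classical
  set K : Fin d → Fin d → ℝ := fun i j => Real.exp (-C i j / 2) with hK
  have hKpos : ∀ i j, 0 < K i j := fun i j => Real.exp_pos _
  have hKsym : ∀ i j, K i j = K j i := by
    intro i j
    have : C i j = C j i := hCsym.apply j i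
    simp [hK, this]
  have hKdiag : ∀ i, K i i = 1 := by intro i; simp [hK, hCdiag i]
  -- some index with positive mass
  obtain ⟨i₀, hi₀⟩ : ∃ i, 0 < α i := by
    by_contra h
    push_neg at h
    have : ∀ i ∈ Finset.univ, α i = 0 := fun i _ => le_antisymm (h i) (h0 i)
    rw [Finset.sum_congr rfl this] at h1
    simp at h1
  set q : (Fin d → ℝ) → ℝ :=
    fun u => ∑ i, ∑ j, α i * α j * K i j * Real.exp (u i + u j) with hq
  have hterm : ∀ (u : Fin d → ℝ) i j, 0 ≤ α i * α j * K i j * Real.exp (u i + u j) := by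
    intro u i j
    have := h0 i; have := h0 j; have := (hKpos i j).le; positivity
  have hqpos : ∀ u, 0 < q u := by
    intro u
    apply Finset.sum_pos' (fun i _ => Finset.sum_nonneg fun j _ => hterm u i j)
    refine ⟨i₀, Finset.mem_univ _, ?_⟩
    apply Finset.sum_pos' (fun j _ => hterm u i₀ j)
    refine ⟨i₀, Finset.mem_univ _, ?_⟩
    have := hKpos i₀ i₀
    positivity
  have hqcont : Continuous q := by
    apply continuous_finset_sum
    intro i _
    apply continuous_finset_sum
    intro j _
    fun_prop
  set F : (Fin d → ℝ) → ℝ :=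
    fun u => (∑ i, α i * u i) - (1/2) * Real.log (q u) with hF
  have hFcont : Continuous F := by
    apply Continuous.sub
    · apply continuous_finset_sum; intro i _; fun_prop
    · exact continuous_const.mul (hqcont.log fun u => (hqpos u).ne')
  set W : Set (Fin d → ℝ) :=
    {u | (∀ j, α j = 0 → u j = 0) ∧ ∑ i, α i * u i = 0} with hW
  -- projection to W
  have hproj : ∀ u, ∃ v ∈ W, F v = F u := by
    intro u
    set c := ∑ k, α k * u k with hc
    refine ⟨fun i => if α i = 0 then 0 else u i - c, ⟨fun j hj => by simp [hj], ?_⟩, ?_⟩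
    · have : ∀ i ∈ Finset.univ,
          α i * (if α i = 0 then 0 else u i - c) = α i * u i - α i * c := by
        intro i _
        by_cases h : α i = 0
        · simp [h]
        · simp [h]; ring
      rw [Finset.sum_congr rfl this, Finset.sum_sub_distrib, ← Finset.sum_mul, h1]
      simp [hc]
    · have hqv : q (fun i => if α i = 0 then 0 else u i - c)
          = Real.exp (-(2*c)) * q u := by
        rw [hq, Finset.mul_sum]
        apply Finset.sum_congr rfl
        intro i _
        rw [Finset.mul_sum]
        apply Finset.sum_congr rfl
        intro j _
        by_cases hi : α i = 0
        · simp [hi]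
        · by_cases hj : α j = 0
          · simp [hj]
          · simp only [hi, hj, if_false]
            rw [show u i - c + (u j - c) = -(2*c) + (u i + u j) by ring, Real.exp_add]
            ring
      simp only [hF]
      rw [hqv, Real.log_mul (Real.exp_ne_zero _) (hqpos u).ne', Real.log_exp]
      have : ∑ i, α i * (if α i = 0 then 0 else u i - c) = 0 := by
        have : ∀ i ∈ Finset.univ,
            α i * (if α i = 0 then 0 else u i - c) = α i * u i - α i * c := by
          intro i _
          by_cases h : α i = 0
          · simp [h]
          · simp [h]; ring
        rw [Finset.sum_congr rfl this, Finset.sum_sub_distrib, ← Finset.sum_mul, h1]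
        simp [hc]
      rw [this]
      ring
  -- the constrained set A
  set A : Set (Fin d → ℝ) := W ∩ {u | F 0 ≤ F u} with hA
  have h0W : (0 : Fin d → ℝ) ∈ W := by
    constructor
    · intro j _; rfl
    · simp
  have h0A : (0 : Fin d → ℝ) ∈ A := ⟨h0W, by simp only [Set.mem_setOf_eq]; exact le_refl _⟩
  have hWclosed : IsClosed W := by
    have e : W = {u : Fin d → ℝ | ∀ j, α j = 0 → u j = 0}
        ∩ {u : Fin d → ℝ | ∑ i, α i * u i = 0} := by
      rw [hW]; ext u; simp [Set.mem_setOf_eq, Set.mem_inter_iff]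
    rw [e]
    apply IsClosed.inter
    · have e2 : {u : Fin d → ℝ | ∀ j, α j = 0 → u j = 0}
          = ⋂ j, {u : Fin d → ℝ | α j = 0 → u j = 0} := by
        ext u; simp [Set.mem_iInter]
      rw [e2]
      apply isClosed_iInter
      intro j
      by_cases h : α j = 0
      · have e3 : {u : Fin d → ℝ | α j = 0 → u j = 0} = {u | u j = 0} := by
          ext u; simp [h]
        rw [e3]
        exact isClosed_eq (continuous_apply j) continuous_const
      · have e3 : {u : Fin d → ℝ | α j = 0 → u j = 0} = Set.univ := by
          ext u; simp [h]
        rw [e3]; exact isClosed_univ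
    · exact isClosed_eq (by fun_prop) continuous_const
  have hAclosed : IsClosed A :=
    hWclosed.inter (isClosed_le continuous_const hFcont)
  -- bounds
  set Q : ℝ := q 0 with hQdef
  have hQpos : 0 < Q := hqpos 0
  set M₁ : ℝ := Finset.univ.sup' ⟨i₀, Finset.mem_univ i₀⟩
    (fun i => (1/2) * Real.log Q - Real.log (α i)) with hM₁
  set M₂ : ℝ := max M₁ 0 with hM₂
  have hM₂0 : 0 ≤ M₂ := le_max_right _ _
  have hbound : A ⊆ Set.pi Set.univ (fun i => Set.Icc (-(M₂ / α i)) M₂) := by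
    rintro u ⟨⟨hsupp, hzero⟩, hFu⟩
    simp only [Set.mem_setOf_eq] at hFu
    have hqu : q u ≤ Q := by
      have h2 : F 0 = -(1/2) * Real.log Q := by simp [hF, hQdef]
      have h3 : F u = -(1/2) * Real.log (q u) := by
        simp only [hF, hzero]; ring
      rw [h2, h3] at hFu
      have h4 : Real.log (q u) ≤ Real.log Q := by nlinarith
      calc q u = Real.exp (Real.log (q u)) := (Real.exp_log (hqpos u)).symm
        _ ≤ Real.exp (Real.log Q) := Real.exp_le_exp.mpr h4
        _ = Q := Real.exp_log hQpos
    have hup : ∀ k, α k ≠ 0 → u k ≤ M₁ := by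
      intro k hk
      have hαk : 0 < α k := lt_of_le_of_ne (h0 k) (Ne.symm hk)
      have hsingle : α k * α k * K k k * Real.exp (u k + u k) ≤ q u := by
        calc α k * α k * K k k * Real.exp (u k + u k)
            ≤ ∑ j, α k * α j * K k j * Real.exp (u k + u j) :=
              Finset.single_le_sum (fun j _ => hterm u k j) (Finset.mem_univ k)
          _ ≤ q u := Finset.single_le_sum
              (fun i _ => Finset.sum_nonneg fun j _ => hterm u i j) (Finset.mem_univ k)
      rw [hKdiag k] at hsingle
      have h5 : α k ^ 2 * Real.exp (2 * u k) ≤ Q := by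
        calc α k ^ 2 * Real.exp (2 * u k)
            = α k * α k * 1 * Real.exp (u k + u k) := by ring_nf
          _ ≤ q u := hsingle
          _ ≤ Q := hqu
      have h6 : Real.exp (2 * u k) ≤ Q / α k ^ 2 := by
        rw [le_div_iff₀ (by positivity)]
        nlinarith [Real.exp_pos (2 * u k)]
      have h7 : 2 * u k ≤ Real.log (Q / α k ^ 2) := by
        calc 2 * u k = Real.log (Real.exp (2 * u k)) := (Real.log_exp _).symm
          _ ≤ Real.log (Q / α k ^ 2) := Real.log_le_log (Real.exp_pos _) h6
      rw [Real.log_div hQpos.ne' (by positivity), Real.log_pow] at h7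
      have h8 : u k ≤ (1/2) * Real.log Q - Real.log (α k) := by
        push_cast at h7; linarith
      exact h8.trans (Finset.le_sup' (fun i => (1/2) * Real.log Q - Real.log (α i)) (Finset.mem_univ k))
    have hupAll : ∀ k, u k ≤ M₂ := by
      intro k
      by_cases h : α k = 0
      · rw [hsupp k h]; exact hM₂0
      · exact (hup k h).trans (le_max_left _ _)
    intro i _
    refine ⟨?_, hupAll i⟩
    by_cases h : α i = 0
    · rw [hsupp i h, h]
      simp
    · have hαi : 0 < α i := lt_of_le_of_ne (h0 i) (Ne.symm h)
      have hsum : α i * u i + ∑ k ∈ Finset.univ.erase i, α k * u k = 0 := by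
        rw [Finset.add_sum_erase _ (fun k => α k * u k) (Finset.mem_univ i)]
        exact hzero
      have hrest : ∑ k ∈ Finset.univ.erase i, α k * u k ≤ M₂ := by
        calc ∑ k ∈ Finset.univ.erase i, α k * u k
            ≤ ∑ k ∈ Finset.univ.erase i, α k * M₂ :=
              Finset.sum_le_sum fun k _ => mul_le_mul_of_nonneg_left (hupAll k) (h0 k)
          _ = (∑ k ∈ Finset.univ.erase i, α k) * M₂ := by rw [Finset.sum_mul]
          _ ≤ 1 * M₂ := by
              apply mul_le_mul_of_nonneg_right _ hM₂0
              rw [← h1]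
              exact Finset.sum_le_sum_of_subset_of_nonneg (Finset.subset_univ _)
                (fun k _ _ => h0 k)
          _ = M₂ := one_mul _
      have h9 : -M₂ ≤ α i * u i := by linarith
      have : -(M₂ / α i) = (-M₂) / α i := by rw [neg_div]
      rw [this, div_le_iff₀ hαi]
      nlinarith
  -- extract maximizer
  have hAcompact : IsCompact A :=
    IsCompact.of_isClosed_subset (isCompact_univ_pi fun i => isCompact_Icc) hAclosed hbound
  obtain ⟨u₀, hu₀A, hu₀max⟩ := hAcompact.exists_isMaxOn ⟨0, h0A⟩ hFcont.continuousOn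
  have hglobal : ∀ u, F u ≤ F u₀ := by
    intro u
    obtain ⟨v, hvW, hvF⟩ := hproj u
    rw [← hvF]
    by_cases h : F 0 ≤ F v
    · exact hu₀max ⟨hvW, h⟩
    · exact (not_le.mp h).le.trans (hu₀max h0A)
  -- criticality
  set y : Fin d → ℝ := fun i => α i * Real.exp (u₀ i) with hy
  have hcrit : ∀ i, y i * (∑ j, K i j * y j) = α i * q u₀ := by
    intro i
    set P : Fin d → ℝ := fun j => if j = i then (1:ℝ) else 0 with hP
    -- derivative of the q-part along direction P
    have hQd : HasDerivAt (fun t => q (fun j => u₀ j + t * P j))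
        (∑ a, ∑ b, α a * α b * K a b * (Real.exp (u₀ a + u₀ b) * (P a + P b))) 0 := by
      simp only [hq]
      apply HasDerivAt.fun_sum
      intro a _
      apply HasDerivAt.fun_sum
      intro b _
      have h1 : HasDerivAt (fun t : ℝ => (u₀ a + t * P a) + (u₀ b + t * P b)) (P a + P b) 0 := by
        have ha : HasDerivAt (fun t : ℝ => u₀ a + t * P a) (P a) 0 := by
          simpa using ((hasDerivAt_id (0:ℝ)).mul_const (P a)).const_add (u₀ a)
        have hb : HasDerivAt (fun t : ℝ => u₀ b + t * P b) (P b) 0 := by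
          simpa using ((hasDerivAt_id (0:ℝ)).mul_const (P b)).const_add (u₀ b)
        exact ha.add hb
      have h2 := (h1.exp).const_mul (α a * α b * K a b)
      simpa [mul_assoc] using h2
    have hLd : HasDerivAt (fun t => ∑ j, α j * (u₀ j + t * P j)) (∑ j, α j * P j) 0 := by
      apply HasDerivAt.fun_sum
      intro j _
      have hj : HasDerivAt (fun t : ℝ => u₀ j + t * P j) (P j) 0 := by
        simpa using ((hasDerivAt_id (0:ℝ)).mul_const (P j)).const_add (u₀ j)
      exact hj.const_mul (α j)
    have hGd : HasDerivAt (fun t => F (fun j => u₀ j + t * P j))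
        ((∑ j, α j * P j) - (1/2) * ((∑ a, ∑ b, α a * α b * K a b *
          (Real.exp (u₀ a + u₀ b) * (P a + P b))) / q (fun j => u₀ j + 0 * P j))) 0 := by
      simp only [hF]
      exact hLd.sub ((hQd.log (hqpos _).ne').const_mul (1/2))
    have hmax : IsLocalMax (fun t => F (fun j => u₀ j + t * P j)) 0 := by
      apply Filter.Eventually.of_forall
      intro t
      have h3 : (fun j => u₀ j + (0:ℝ) * P j) = u₀ := by funext j; simp
      simp only [h3]
      exact hglobal _
    have hzero := hmax.hasDerivAt_eq_zero hGd
    have hu₀eq : (fun j => u₀ j + (0:ℝ) * P j) = u₀ := by funext j; simp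
    rw [hu₀eq] at hzero
    -- simplify the sums
    have hL : (∑ j, α j * P j) = α i := by
      simp [hP, mul_ite]
    have hD : (∑ a, ∑ b, α a * α b * K a b * (Real.exp (u₀ a + u₀ b) * (P a + P b)))
        = 2 * (y i * ∑ j, K i j * y j) := by
      have split : ∀ a b, α a * α b * K a b * (Real.exp (u₀ a + u₀ b) * (P a + P b))
          = α a * α b * K a b * Real.exp (u₀ a + u₀ b) * P a
            + α a * α b * K a b * Real.exp (u₀ a + u₀ b) * P b := by
        intro a b; ring
      simp only [split, Finset.sum_add_distrib]
      have e1 : ∑ a, ∑ b, α a * α b * K a b * Real.exp (u₀ a + u₀ b) * P a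
          = y i * ∑ j, K i j * y j := by
        rw [Finset.sum_eq_single i]
        · rw [Finset.mul_sum]
          apply Finset.sum_congr rfl
          intro b _
          simp only [hP, if_pos rfl, hy, Real.exp_add]
          ring
        · intro a _ ha
          apply Finset.sum_eq_zero
          intro b _
          simp [hP, ha]
        · intro h; exact absurd (Finset.mem_univ i) h
      have e2 : ∑ a, ∑ b, α a * α b * K a b * Real.exp (u₀ a + u₀ b) * P b
          = y i * ∑ j, K i j * y j := by
        rw [Finset.sum_comm, Finset.sum_eq_single i]
        · rw [Finset.mul_sum]
          apply Finset.sum_congr rfl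
          intro a _
          simp only [hP, if_pos rfl, hy, Real.exp_add, hKsym a i]
          ring
        · intro b _ hb
          apply Finset.sum_eq_zero
          intro a _
          simp [hP, hb]
        · intro h; exact absurd (Finset.mem_univ i) h
      rw [e1, e2]
      ring
    rw [hL, hD] at hzero
    have hqne := (hqpos u₀).ne'
    field_simp at hzero
    linarith
  -- conclusion
  set s := Real.sqrt (q u₀) with hs
  have hspos : 0 < s := Real.sqrt_pos.mpr (hqpos u₀)
  refine ⟨fun i => y i / s,
    fun i => div_nonneg (mul_nonneg (h0 i) (Real.exp_pos _).le) hspos.le, ?_⟩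
  intro i
  have hySum : ∑ j, Real.exp (-C i j / 2) * (y j / s) = (∑ j, K i j * y j) / s := by
    rw [Finset.sum_div]
    apply Finset.sum_congr rfl
    intro j _
    rw [hK]
    ring
  rw [hySum, div_mul_div_comm, hs, Real.mul_self_sqrt (hqpos u₀).le, hcrit i,
    mul_div_assoc, div_self (hqpos u₀).ne', mul_one]



lemma OTcost_bddBelow {d : ℕ} (C : Matrix (Fin d) (Fin d) ℝ) (α : Fin d → ℝ)
    (h0 : ∀ i, 0 ≤ α i) (h1 : ∑ i, α i = 1) :
    ∀ p ∈ couplings α α,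
      -(∑ i, ∑ j, |C i j|) - 2 * (d:ℝ)^2 ≤ OTcost C 2 α α p := by
  rintro p ⟨hp0, hrow, hcol, hsupp⟩
  have hple : ∀ i j, p i j ≤ 1 := by
    intro i j
    have h2 : p i j ≤ ∑ k, p i k :=
      Finset.single_le_sum (fun k _ => hp0 i k) (Finset.mem_univ j)
    have h3 : α i ≤ ∑ k, α k :=
      Finset.single_le_sum (fun k _ => h0 k) (Finset.mem_univ i)
    rw [hrow i] at h2
    rw [h1] at h3
    linarith
  have hterm1 : ∀ i j, -|C i j| ≤ p i j * C i j := by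
    intro i j
    have := abs_le.mp (le_refl |C i j|)
    nlinarith [hp0 i j, hple i j, abs_nonneg (C i j), neg_abs_le (C i j), le_abs_self (C i j)]
  have hterm2 : ∀ i j, -1 ≤ p i j * Real.log (p i j / (α i * α j)) := by
    intro i j
    rcases eq_or_lt_of_le (hp0 i j) with h | h
    · rw [← h]; norm_num
    · have hαα : 0 < α i * α j := by
        rcases eq_or_lt_of_le (mul_nonneg (h0 i) (h0 j)) with h' | h'
        · exact absurd (hsupp i j h'.symm) h.ne'
        · exact h'
      have hαα1 : α i * α j ≤ 1 := by
        have hi : α i ≤ 1 := by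
          have := Finset.single_le_sum (fun k _ => h0 k) (Finset.mem_univ i)
          rw [h1] at this; exact this
        have hj : α j ≤ 1 := by
          have := Finset.single_le_sum (fun k _ => h0 k) (Finset.mem_univ j)
          rw [h1] at this; exact this
        nlinarith [h0 i, h0 j]
      rw [Real.log_div h.ne' hαα.ne']
      have hlogp : 1 - 1/(p i j) ≤ Real.log (p i j) := by
        have := Real.log_le_sub_one_of_pos (show (0:ℝ) < 1/(p i j) by positivity)
        rw [Real.log_div one_ne_zero h.ne'] at this
        simp only [Real.log_one] at this
        linarith
      have hlogα : Real.log (α i * α j) ≤ 0 := Real.log_nonpos hαα.le hαα1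
      have h4 : p i j - 1 ≤ p i j * Real.log (p i j) := by
        have := mul_le_mul_of_nonneg_left hlogp (hp0 i j)
        have hne : p i j * (1/(p i j)) = 1 := by field_simp
        nlinarith
      nlinarith [mul_nonpos_of_nonneg_of_nonpos (hp0 i j) hlogα, hp0 i j]
  unfold OTcost
  have hb1 : -(∑ i, ∑ j, |C i j|) ≤ ∑ i, ∑ j, p i j * C i j := by
    rw [← Finset.sum_neg_distrib]
    apply Finset.sum_le_sum
    intro i _
    rw [← Finset.sum_neg_distrib]
    exact Finset.sum_le_sum fun j _ => hterm1 i j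
  have hb2 : -((d:ℝ)^2) ≤ ∑ i, ∑ j, p i j * Real.log (p i j / (α i * α j)) := by
    calc -((d:ℝ)^2) = ∑ _i : Fin d, ∑ _j : Fin d, (-1 : ℝ) := by
          simp [Finset.sum_const]; ring
      _ ≤ _ := Finset.sum_le_sum fun i _ =>
          Finset.sum_le_sum fun j _ => hterm2 i j
  linarith


lemma upper_bound {d : ℕ} (C : Matrix (Fin d) (Fin d) ℝ) (hCsym : C.IsSymm)
    (hCdiag : ∀ i, C i i = 0) (f : Fin d → ℝ) (m : ℝ) (hmpos : 0 < m)
    (hm : ∀ β ∈ stdSimplex ℝ (Fin d), m ≤ Phi C β f)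
    (α : Fin d → ℝ) (hα : α ∈ stdSimplex ℝ (Fin d)) :
    (∑ i, α i * f i) - Omega C α ≤ -Real.log m := by
  classical
  obtain ⟨h0, h1⟩ := hα
  obtain ⟨x, hx0, hxm⟩ := sinkhorn_exists C hCsym hCdiag α h0 h1
  set K : Fin d → Fin d → ℝ := fun i j => Real.exp (-C i j / 2) with hK
  have hKpos : ∀ i j, 0 < K i j := fun i j => Real.exp_pos _
  set Kx : Fin d → ℝ := fun i => ∑ j, K i j * x j with hKx
  obtain ⟨i₀, hi₀⟩ : ∃ i, 0 < α i := by
    by_contra h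
    push_neg at h
    have : ∀ i ∈ Finset.univ, α i = 0 := fun i _ => le_antisymm (h i) (h0 i)
    rw [Finset.sum_congr rfl this] at h1
    simp at h1
  have hxi₀ : 0 < x i₀ := by
    rcases eq_or_lt_of_le (hx0 i₀) with h | h
    · exfalso; have := hxm i₀; rw [← h] at this; simp at this; rw [← this] at hi₀; simp at hi₀
    · exact h
  have hKxpos : ∀ i, 0 < Kx i := by
    intro i
    have h2 : K i i₀ * x i₀ ≤ Kx i :=
      Finset.single_le_sum (fun j _ => mul_nonneg (hKpos i j).le (hx0 j)) (Finset.mem_univ i₀)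
    nlinarith [hKpos i i₀]
  have hxpos : ∀ i, 0 < α i → 0 < x i := by
    intro i hi
    rcases eq_or_lt_of_le (hx0 i) with h | h
    · exfalso; have := hxm i; rw [← h, zero_mul] at this; rw [← this] at hi; simp at hi
    · exact h
  have hxsupp : ∀ i, α i = 0 → x i = 0 := by
    intro i hi
    have := hxm i
    rw [hi, mul_eq_zero] at this
    rcases this with h | h
    · exact h
    · exact absurd h (hKxpos i).ne'
  -- the coupling
  set p : Matrix (Fin d) (Fin d) ℝ := fun i j => x i * (K i j * x j) with hp
  have hrow : ∀ i, ∑ j, p i j = α i := by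
    intro i
    rw [hp]
    simp only
    rw [← Finset.mul_sum]
    exact hxm i
  have hCji : ∀ i j, C j i = C i j := fun i j => hCsym.apply i j
  have hKsym : ∀ i j, K i j = K j i := by intro i j; simp [hK, hCji i j]
  have hcol : ∀ j, ∑ i, p i j = α j := by
    intro j
    have : ∀ i ∈ Finset.univ, p i j = x j * (K j i * x i) := by
      intro i _; rw [hp]; simp only; rw [hKsym i j]; ring
    rw [Finset.sum_congr rfl this, ← Finset.mul_sum]
    exact hxm j
  have hpmem : p ∈ couplings α α := by
    refine ⟨fun i j => mul_nonneg (hx0 i) (mul_nonneg (hKpos i j).le (hx0 j)), hrow, hcol, ?_⟩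
    intro i j hij
    rcases mul_eq_zero.mp hij with h | h
    · rw [hp]; simp only; rw [hxsupp i h]; ring
    · rw [hp]; simp only; rw [hxsupp j h]; ring
  -- cost of the coupling
  have hcost : OTcost C 2 α α p = 4 * ∑ i, α i * (Real.log (x i) - Real.log (α i)) := by
    set L : Fin d → ℝ := fun i => Real.log (x i) - Real.log (α i) with hL
    have hterm : ∀ i j, p i j * C i j + 2 * (p i j * Real.log (p i j / (α i * α j)))
        = 2 * (p i j * L i) + 2 * (p i j * L j) := by
      intro i j
      rcases eq_or_lt_of_le (hx0 i) with hxi | hxi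
      · have hp0 : p i j = 0 := by rw [hp]; simp only; rw [← hxi]; ring
        rw [hp0]; ring
      rcases eq_or_lt_of_le (hx0 j) with hxj | hxj
      · have hp0 : p i j = 0 := by rw [hp]; simp only; rw [← hxj]; ring
        rw [hp0]; ring
      have hαi : 0 < α i := by rw [← hxm i]; exact mul_pos hxi (hKxpos i)
      have hαj : 0 < α j := by rw [← hxm j]; exact mul_pos hxj (hKxpos j)
      have hppos : 0 < p i j := by
        rw [hp]; exact mul_pos hxi (mul_pos (hKpos i j) hxj)
      have hlogp : Real.log (p i j / (α i * α j))
          = Real.log (x i) + (-C i j / 2) + Real.log (x j)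
            - (Real.log (α i) + Real.log (α j)) := by
        rw [Real.log_div hppos.ne' (mul_pos hαi hαj).ne', hp]
        simp only
        rw [Real.log_mul hxi.ne' (mul_pos (hKpos i j) hxj).ne',
          Real.log_mul (hKpos i j).ne' hxj.ne', Real.log_mul hαi.ne' hαj.ne']
        simp only [hK, Real.log_exp]
        ring
      rw [hlogp, hL]
      ring
    have e0 : OTcost C 2 α α p
        = ∑ i, ∑ j, (p i j * C i j + 2 * (p i j * Real.log (p i j / (α i * α j)))) := by
      unfold OTcost
      rw [Finset.mul_sum, ← Finset.sum_add_distrib]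
      apply Finset.sum_congr rfl
      intro i _
      rw [Finset.mul_sum, ← Finset.sum_add_distrib]
    rw [e0]
    have e1 : ∑ i, ∑ j, (p i j * C i j + 2 * (p i j * Real.log (p i j / (α i * α j))))
        = ∑ i, ∑ j, (2 * (p i j * L i) + 2 * (p i j * L j)) :=
      Finset.sum_congr rfl fun i _ => Finset.sum_congr rfl fun j _ => hterm i j
    rw [e1]
    have e2 : ∑ i, ∑ j, (2 * (p i j * L i) + 2 * (p i j * L j))
        = 2 * (∑ i, ∑ j, p i j * L i) + 2 * (∑ i, ∑ j, p i j * L j) := by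
      rw [Finset.mul_sum, Finset.mul_sum, ← Finset.sum_add_distrib]
      apply Finset.sum_congr rfl
      intro i _
      rw [Finset.mul_sum, Finset.mul_sum, ← Finset.sum_add_distrib]
    rw [e2]
    have e3 : ∑ i, ∑ j, p i j * L i = ∑ i, α i * L i := by
      apply Finset.sum_congr rfl
      intro i _
      rw [← Finset.sum_mul, hrow i]
    have e4 : ∑ i, ∑ j, p i j * L j = ∑ j, α j * L j := by
      rw [Finset.sum_comm]
      apply Finset.sum_congr rfl
      intro j _
      rw [← Finset.sum_mul, hcol j]
    rw [e3, e4]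
    ring
  -- OT bounded by cost of p
  have hOTle : OT C 2 α α ≤ OTcost C 2 α α p := by
    apply csInf_le
    · exact ⟨-(∑ i, ∑ j, |C i j|) - 2 * (d:ℝ)^2, by
        rintro v ⟨p', hp', rfl⟩
        exact OTcost_bddBelow C α h0 h1 p' hp'⟩
    · exact ⟨p, hpmem, rfl⟩
  -- main estimate
  have hmain : (∑ i, α i * f i) + 2 * ∑ i, α i * (Real.log (x i) - Real.log (α i))
      ≤ -Real.log m := by
    have hKxdef : ∀ i, (∑ j, K i j * x j) = Kx i := fun i => rfl
    set T : ℝ := ∑ i, Real.exp (f i) * (x i / Kx i) with hT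
    have hTpos : 0 < T := by
      apply Finset.sum_pos'
      · intro i _
        have h2 := (hKxpos i).le
        have h3 := hx0 i
        positivity
      · refine ⟨i₀, Finset.mem_univ _, ?_⟩
        have h2 := hKxpos i₀
        positivity
    set β : Fin d → ℝ := fun i => Real.exp (f i) * (x i / Kx i) / T with hβ
    have hβmem : β ∈ stdSimplex ℝ (Fin d) := by
      constructor
      · intro i
        have h2 := (hKxpos i).le
        have h3 := hx0 i
        positivity
      · rw [hβ]
        simp only
        rw [← Finset.sum_div, ← hT, div_self hTpos.ne']
    set a : Fin d → ℝ := fun i => Real.exp (f i / 2) / Kx i with ha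
    have hrowT : ∀ i, ∑ j, K i j * (x i * x j) * a i ^ 2
        = Real.exp (f i) * (x i / Kx i) := by
      intro i
      have h2 : ∀ j ∈ Finset.univ, K i j * (x i * x j) * a i ^ 2
          = (x i * a i ^ 2) * (K i j * x j) := by intro j _; ring
      rw [Finset.sum_congr rfl h2, ← Finset.mul_sum, hKxdef i, ha]
      simp only
      have h1' := (hKxpos i).ne'
      have hsq : Real.exp (f i / 2) ^ 2 = Real.exp (f i) := by
        rw [sq, ← Real.exp_add]; norm_num
      rw [div_pow, hsq]
      field_simp
    have hPhile : Phi C β f ≤ 1 / T := by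
      have hid : ∀ i j, β i * β j * Real.exp (-(f i + f j + C i j) / 2)
          = (K i j * (x i * x j) * (a i * a j)) / T ^ 2 := by
        intro i j
        rw [hβ, ha, hK]
        simp only
        rw [show -(f i + f j + C i j) / 2 = (-C i j / 2) + (-(f i / 2)) + (-(f j / 2)) by ring,
          Real.exp_add, Real.exp_add, Real.exp_neg (f i / 2), Real.exp_neg (f j / 2)]
        have hei : Real.exp (f i) = Real.exp (f i / 2) * Real.exp (f i / 2) := by
          rw [← Real.exp_add]; ring_nf
        have hej : Real.exp (f j) = Real.exp (f j / 2) * Real.exp (f j / 2) := by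
          rw [← Real.exp_add]; ring_nf
        rw [hei, hej]
        have h1' := (hKxpos i).ne'
        have h2' := (hKxpos j).ne'
        have h3' := (Real.exp_pos (f i / 2)).ne'
        have h4' := (Real.exp_pos (f j / 2)).ne'
        field_simp
      have hT2 : (0:ℝ) < T ^ 2 := by positivity
      have hbound : ∀ i j, β i * β j * Real.exp (-(f i + f j + C i j) / 2)
          ≤ (K i j * (x i * x j) * ((a i ^ 2 + a j ^ 2) / 2)) / T ^ 2 := by
        intro i j
        rw [hid i j, div_le_div_iff_of_pos_right hT2]
        have hAM : a i * a j ≤ (a i ^ 2 + a j ^ 2) / 2 := by nlinarith [sq_nonneg (a i - a j)]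
        have hxx : 0 ≤ K i j * (x i * x j) :=
          mul_nonneg (hKpos i j).le (mul_nonneg (hx0 i) (hx0 j))
        exact mul_le_mul_of_nonneg_left hAM hxx
      have hsumid : ∑ i, ∑ j, K i j * (x i * x j) * ((a i ^ 2 + a j ^ 2) / 2) = T := by
        have hsplit : ∀ i ∈ Finset.univ, ∀ j ∈ Finset.univ,
            K i j * (x i * x j) * ((a i ^ 2 + a j ^ 2) / 2)
            = K i j * (x i * x j) * a i ^ 2 / 2 + K i j * (x i * x j) * a j ^ 2 / 2 := by
          intro i _ j _; ring
        have e0 : ∑ i, ∑ j, K i j * (x i * x j) * ((a i ^ 2 + a j ^ 2) / 2)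
            = (∑ i, ∑ j, K i j * (x i * x j) * a i ^ 2 / 2)
              + ∑ i, ∑ j, K i j * (x i * x j) * a j ^ 2 / 2 := by
          rw [← Finset.sum_add_distrib]
          apply Finset.sum_congr rfl
          intro i hi
          rw [← Finset.sum_add_distrib]
          exact Finset.sum_congr rfl fun j hj => hsplit i hi j hj
        have e1 : ∑ i, ∑ j, K i j * (x i * x j) * a i ^ 2 / 2 = T / 2 := by
          have h2 : ∀ i ∈ Finset.univ, ∑ j, K i j * (x i * x j) * a i ^ 2 / 2
              = Real.exp (f i) * (x i / Kx i) / 2 := by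
            intro i _
            rw [← Finset.sum_div, hrowT i]
          rw [Finset.sum_congr rfl h2, ← Finset.sum_div, ← hT]
        have e2 : ∑ i, ∑ j, K i j * (x i * x j) * a j ^ 2 / 2 = T / 2 := by
          rw [Finset.sum_comm]
          have h2 : ∀ j ∈ Finset.univ, ∑ i, K i j * (x i * x j) * a j ^ 2 / 2
              = Real.exp (f j) * (x j / Kx j) / 2 := by
            intro j _
            rw [← Finset.sum_div]
            have h3 : ∀ i ∈ Finset.univ, K i j * (x i * x j) * a j ^ 2
                = K j i * (x j * x i) * a j ^ 2 := by
              intro i _; rw [hKsym i j]; ring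
            rw [Finset.sum_congr rfl h3, hrowT j]
          rw [Finset.sum_congr rfl h2, ← Finset.sum_div, ← hT]
        rw [e0, e1, e2]
        ring
      have hPhi2 : Phi C β f
          ≤ ∑ i, ∑ j, (K i j * (x i * x j) * ((a i ^ 2 + a j ^ 2) / 2)) / T ^ 2 := by
        unfold Phi
        exact Finset.sum_le_sum fun i _ => Finset.sum_le_sum fun j _ => hbound i j
      have hPhi3 : ∑ i, ∑ j, (K i j * (x i * x j) * ((a i ^ 2 + a j ^ 2) / 2)) / T ^ 2
          = T / T ^ 2 := by
        have h2 : ∀ i ∈ Finset.univ,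
            ∑ j, (K i j * (x i * x j) * ((a i ^ 2 + a j ^ 2) / 2)) / T ^ 2
            = (∑ j, K i j * (x i * x j) * ((a i ^ 2 + a j ^ 2) / 2)) / T ^ 2 := by
          intro i _
          rw [Finset.sum_div]
        rw [Finset.sum_congr rfl h2, ← Finset.sum_div, hsumid]
      have hTT : T / T ^ 2 = 1 / T := by
        rw [sq, div_mul_eq_div_div, div_self hTpos.ne']
      rw [hPhi3, hTT] at hPhi2
      exact hPhi2
    have hmT : m * T ≤ 1 := by
      have h5 := hm β hβmem
      have h6 : m ≤ 1 / T := h5.trans hPhile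
      rw [le_div_iff₀ hTpos] at h6
      linarith
    -- per-index estimate
    have hper : ∀ i ∈ Finset.univ,
        α i * (f i + 2 * (Real.log (x i) - Real.log (α i)) + Real.log m)
        ≤ m * (Real.exp (f i) * (x i / Kx i)) - α i := by
      intro i _
      rcases eq_or_lt_of_le (h0 i) with hαi | hαi
      · rw [← hαi, hxsupp i hαi.symm]
        simp
      · have hxi := hxpos i hαi
        have hlog : f i + 2 * (Real.log (x i) - Real.log (α i)) + Real.log m
            = Real.log (m * Real.exp (f i) * (x i / α i) ^ 2) := by
          rw [Real.log_mul (by positivity) (by positivity),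
            Real.log_mul hmpos.ne' (Real.exp_ne_zero _), Real.log_exp, Real.log_pow,
            Real.log_div hxi.ne' hαi.ne']
          push_cast
          ring
        rw [hlog]
        have hle := Real.log_le_sub_one_of_pos
          (show 0 < m * Real.exp (f i) * (x i / α i) ^ 2 by positivity)
        have hα2 : α i = x i * Kx i := by
          have h3 := (hxm i).symm
          rw [hKxdef i] at h3
          exact h3
        have hxx2 : α i * (m * Real.exp (f i) * (x i / α i) ^ 2)
            = m * (Real.exp (f i) * (x i / Kx i)) := by
          rw [hα2]
          have h1' := (hKxpos i).ne'
          have h2' := hxi.ne'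
          field_simp
        calc α i * (Real.log (m * Real.exp (f i) * (x i / α i) ^ 2))
            ≤ α i * (m * Real.exp (f i) * (x i / α i) ^ 2 - 1) :=
              mul_le_mul_of_nonneg_left hle hαi.le
          _ = α i * (m * Real.exp (f i) * (x i / α i) ^ 2) - α i := by ring
          _ = m * (Real.exp (f i) * (x i / Kx i)) - α i := by rw [hxx2]
    have hexpand : (∑ i, α i * f i) + 2 * ∑ i, α i * (Real.log (x i) - Real.log (α i))
        + Real.log m
        = ∑ i, α i * (f i + 2 * (Real.log (x i) - Real.log (α i)) + Real.log m) := by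
      have h2 : ∀ i ∈ Finset.univ,
          α i * (f i + 2 * (Real.log (x i) - Real.log (α i)) + Real.log m)
          = α i * f i + 2 * (α i * (Real.log (x i) - Real.log (α i)))
            + α i * Real.log m := by
        intro i _; ring
      rw [Finset.sum_congr rfl h2, Finset.sum_add_distrib, Finset.sum_add_distrib,
        ← Finset.sum_mul, h1, one_mul, ← Finset.mul_sum]
    have hsum1 : ∑ i, α i * (f i + 2 * (Real.log (x i) - Real.log (α i)) + Real.log m)
        ≤ m * T - 1 := by
      calc ∑ i, α i * (f i + 2 * (Real.log (x i) - Real.log (α i)) + Real.log m)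
          ≤ ∑ i, (m * (Real.exp (f i) * (x i / Kx i)) - α i) := Finset.sum_le_sum hper
        _ = m * T - 1 := by
            rw [Finset.sum_sub_distrib, ← Finset.mul_sum, ← hT, h1]
    linarith [hexpand, hsum1, hmT]
  unfold Omega
  linarith [hOTle, hmain, hcost]



lemma lower_bound {d : ℕ} (C : Matrix (Fin d) (Fin d) ℝ) (f β : Fin d → ℝ)
    (hβ0 : ∀ i, 0 ≤ β i) (hβ1 : ∑ i, β i = 1) :
    -Real.log (Phi C β f) ≤ (∑ i, β i * f i) - Omega C β := by
  classical
  obtain ⟨i₀, hi₀⟩ : ∃ i, 0 < β i := by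
    by_contra h
    push_neg at h
    have h2 : ∀ i ∈ Finset.univ, β i = 0 := fun i _ => le_antisymm (h i) (hβ0 i)
    rw [Finset.sum_congr rfl h2] at hβ1
    simp at hβ1
  set W : Fin d → Fin d → ℝ :=
    fun i j => β i * β j * Real.exp (-(f i + f j + C i j) / 2) with hW
  have hWnn : ∀ i j, 0 ≤ W i j := by
    intro i j
    have := hβ0 i; have := hβ0 j
    have := (Real.exp_pos (-(f i + f j + C i j) / 2)).le
    positivity
  have hΦW : Phi C β f = ∑ i, ∑ j, W i j := rfl
  have hΦpos : 0 < Phi C β f := by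
    rw [hΦW]
    apply Finset.sum_pos' (fun i _ => Finset.sum_nonneg fun j _ => hWnn i j)
    refine ⟨i₀, Finset.mem_univ _, ?_⟩
    apply Finset.sum_pos' (fun j _ => hWnn i₀ j)
    refine ⟨i₀, Finset.mem_univ _, ?_⟩
    have := Real.exp_pos (-(f i₀ + f i₀ + C i₀ i₀) / 2)
    have := hi₀
    positivity
  have hkey : ∀ p ∈ couplings β β,
      2 * (-Real.log (Phi C β f) - ∑ i, β i * f i) ≤ OTcost C 2 β β p := by
    rintro p ⟨hp0, hrow, hcol, hsupp⟩
    set A := ∑ i, ∑ j, p i j * Real.log (p i j / W i j) with hA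
    have hWpos : ∀ i j, 0 < p i j → 0 < W i j := by
      intro i j hp
      have hββ : 0 < β i * β j := by
        rcases eq_or_lt_of_le (mul_nonneg (hβ0 i) (hβ0 j)) with h | h
        · exact absurd (hsupp i j h.symm) hp.ne'
        · exact h
      rw [hW]
      have := Real.exp_pos (-(f i + f j + C i j) / 2)
      positivity
    -- identity: A = ⟨β,f⟩ + (1/2) OTcost
    have hpt : ∀ i ∈ Finset.univ, ∀ j ∈ Finset.univ,
        p i j * Real.log (p i j / W i j)
        = p i j * f i / 2 + p i j * f j / 2 + p i j * C i j / 2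
          + p i j * Real.log (p i j / (β i * β j)) := by
      intro i _ j _
      rcases eq_or_lt_of_le (hp0 i j) with h | h
      · rw [← h]; ring
      · have hWij := hWpos i j h
        have hββ : 0 < β i * β j := by
          rcases eq_or_lt_of_le (mul_nonneg (hβ0 i) (hβ0 j)) with h' | h'
          · exact absurd (hsupp i j h'.symm) h.ne'
          · exact h'
        rw [Real.log_div h.ne' hWij.ne', Real.log_div h.ne' hββ.ne', hW]
        simp only
        rw [Real.log_mul hββ.ne' (Real.exp_ne_zero _), Real.log_exp]
        ring
    have hAeq : A = (∑ i, β i * f i) + (∑ i, ∑ j, p i j * C i j) / 2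
        + ∑ i, ∑ j, p i j * Real.log (p i j / (β i * β j)) := by
      have e0 : A = ∑ i, ∑ j, (p i j * f i / 2 + p i j * f j / 2 + p i j * C i j / 2
          + p i j * Real.log (p i j / (β i * β j))) := by
        rw [hA]
        exact Finset.sum_congr rfl fun i hi => Finset.sum_congr rfl fun j hj => hpt i hi j hj
      rw [e0]
      simp only [Finset.sum_add_distrib]
      have e1 : ∑ i, ∑ j, p i j * f i / 2 = (∑ i, β i * f i) / 2 := by
        have h2 : ∀ i ∈ Finset.univ, ∑ j, p i j * f i / 2 = β i * f i / 2 := by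
          intro i _
          rw [← Finset.sum_div, ← Finset.sum_mul, hrow i]
        rw [Finset.sum_congr rfl h2, ← Finset.sum_div]
      have e2 : ∑ i, ∑ j, p i j * f j / 2 = (∑ i, β i * f i) / 2 := by
        rw [Finset.sum_comm]
        have h2 : ∀ j ∈ Finset.univ, ∑ i, p i j * f j / 2 = β j * f j / 2 := by
          intro j _
          rw [← Finset.sum_div, ← Finset.sum_mul, hcol j]
        rw [Finset.sum_congr rfl h2, ← Finset.sum_div]
      have e3 : ∑ i, ∑ j, p i j * C i j / 2 = (∑ i, ∑ j, p i j * C i j) / 2 := by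
        have h2 : ∀ i ∈ Finset.univ, ∑ j, p i j * C i j / 2 = (∑ j, p i j * C i j) / 2 := by
          intro i _
          rw [← Finset.sum_div]
        rw [Finset.sum_congr rfl h2, ← Finset.sum_div]
      rw [e1, e2, e3]
      ring
    -- Jensen
    have hJ : -Real.log (Phi C β f) ≤ A := by
      set s := (Finset.univ ×ˢ Finset.univ).filter
        (fun q : Fin d × Fin d => 0 < p q.1 q.2) with hsdef
      have hsub : ∀ g : Fin d × Fin d → ℝ,
          (∀ q ∈ Finset.univ ×ˢ Finset.univ, g q ≠ 0 → 0 < p q.1 q.2) →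
          ∑ q ∈ s, g q = ∑ q ∈ Finset.univ ×ˢ Finset.univ, g q := by
        intro g hg
        exact Finset.sum_filter_of_ne hg
      have hApair : A = ∑ q ∈ s, p q.1 q.2 * Real.log (p q.1 q.2 / W q.1 q.2) := by
        rw [hA, ← Finset.sum_product']
        refine (hsub _ ?_).symm
        intro q _ hne
        rcases eq_or_lt_of_le (hp0 q.1 q.2) with h | h
        · exact absurd (by rw [← h]; ring) hne
        · exact h
      have hp1 : ∑ q ∈ s, p q.1 q.2 = 1 := by
        rw [hsub _ (fun q _ hne => lt_of_le_of_ne (hp0 q.1 q.2) (Ne.symm hne)),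
          Finset.sum_product' (f := fun i j => p i j)]
        calc ∑ i, ∑ j, p i j = ∑ i, β i := Finset.sum_congr rfl fun i _ => hrow i
          _ = 1 := hβ1
      have hWle : ∑ q ∈ s, W q.1 q.2 ≤ Phi C β f := by
        rw [hΦW, ← Finset.sum_product']
        exact Finset.sum_le_sum_of_subset_of_nonneg (Finset.filter_subset _ _)
          (fun q _ _ => hWnn q.1 q.2)
      have hper : ∀ q ∈ s,
          p q.1 q.2 * Real.log (W q.1 q.2 / p q.1 q.2)
            - p q.1 q.2 * Real.log (Phi C β f)
          ≤ W q.1 q.2 / Phi C β f - p q.1 q.2 := by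
        intro q hq
        have hpq : 0 < p q.1 q.2 := (Finset.mem_filter.mp hq).2
        have hWq : 0 < W q.1 q.2 := hWpos _ _ hpq
        have harg : 0 < W q.1 q.2 / (p q.1 q.2 * Phi C β f) := by positivity
        have hlog := Real.log_le_sub_one_of_pos harg
        have h7 : Real.log (W q.1 q.2 / p q.1 q.2) - Real.log (Phi C β f)
            = Real.log (W q.1 q.2 / (p q.1 q.2 * Phi C β f)) := by
          rw [← Real.log_div (div_pos hWq hpq).ne' hΦpos.ne', div_div]
        have h8 : p q.1 q.2 * Real.log (W q.1 q.2 / (p q.1 q.2 * Phi C β f))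
            ≤ p q.1 q.2 * (W q.1 q.2 / (p q.1 q.2 * Phi C β f) - 1) :=
          mul_le_mul_of_nonneg_left hlog hpq.le
        have h9 : p q.1 q.2 * (W q.1 q.2 / (p q.1 q.2 * Phi C β f) - 1)
            = W q.1 q.2 / Phi C β f - p q.1 q.2 := by
          field_simp
        calc p q.1 q.2 * Real.log (W q.1 q.2 / p q.1 q.2)
              - p q.1 q.2 * Real.log (Phi C β f)
            = p q.1 q.2 * (Real.log (W q.1 q.2 / p q.1 q.2)
              - Real.log (Phi C β f)) := by ring
          _ = p q.1 q.2 * Real.log (W q.1 q.2 / (p q.1 q.2 * Phi C β f)) := by rw [h7]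
          _ ≤ p q.1 q.2 * (W q.1 q.2 / (p q.1 q.2 * Phi C β f) - 1) := h8
          _ = W q.1 q.2 / Phi C β f - p q.1 q.2 := h9
      have hsum := Finset.sum_le_sum hper
      have t1 : ∑ q ∈ s, (p q.1 q.2 * Real.log (W q.1 q.2 / p q.1 q.2)
            - p q.1 q.2 * Real.log (Phi C β f))
          = (∑ q ∈ s, p q.1 q.2 * Real.log (W q.1 q.2 / p q.1 q.2))
            - Real.log (Phi C β f) := by
        rw [Finset.sum_sub_distrib, ← Finset.sum_mul, hp1, one_mul]
      have t2 : ∑ q ∈ s, (W q.1 q.2 / Phi C β f - p q.1 q.2)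
          = (∑ q ∈ s, W q.1 q.2) / Phi C β f - 1 := by
        rw [Finset.sum_sub_distrib, ← Finset.sum_div, hp1]
      rw [t1, t2] at hsum
      have hdiv : (∑ q ∈ s, W q.1 q.2) / Phi C β f ≤ 1 := by
        rw [div_le_one hΦpos]
        exact hWle
      have hAneg : A = -∑ q ∈ s, p q.1 q.2 * Real.log (W q.1 q.2 / p q.1 q.2) := by
        rw [hApair, ← Finset.sum_neg_distrib]
        apply Finset.sum_congr rfl
        intro q hq
        have hpq : 0 < p q.1 q.2 := (Finset.mem_filter.mp hq).2
        have hWq : 0 < W q.1 q.2 := hWpos _ _ hpq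
        rw [Real.log_div hpq.ne' hWq.ne', Real.log_div hWq.ne' hpq.ne']
        ring
      rw [hAneg]
      linarith [hsum, hdiv]
    rw [hAeq] at hJ
    unfold OTcost
    linarith [hJ]
  have hOTge : 2 * (-Real.log (Phi C β f) - ∑ i, β i * f i) ≤ OT C 2 β β := by
    apply le_csInf
    · refine ⟨OTcost C 2 β β (fun i j => β i * β j), ⟨fun i j => β i * β j, ?_, rfl⟩⟩
      refine ⟨fun i j => mul_nonneg (hβ0 i) (hβ0 j), ?_, ?_, fun i j h => h⟩
      · intro i; rw [← Finset.mul_sum, hβ1, mul_one]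
      · intro j; rw [← Finset.sum_mul, hβ1, one_mul]
    · rintro v ⟨p, hp, rfl⟩
      exact hkey p hp
  unfold Omega
  linarith [hOTge]

/-- The Legendre conjugate of the Sinkhorn negentropy:
`max_{α ∈ △^d} (⟨α,f⟩ - Ω_C(α)) = -log min_{α ∈ △^d} Φ_C(α,f)`. -/
theorem conjugate_sinkhorn_negentropy (d : ℕ) (hd : 1 ≤ d)
    (C : Matrix (Fin d) (Fin d) ℝ) (hCsym : C.IsSymm) (hCdiag : ∀ i, C i i = 0)
    (f : Fin d → ℝ) :
    sSup ((fun α => (∑ i, α i * f i) - Omega C α) '' simplexS d)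
      = -Real.log (sInf ((fun α => Phi C α f) '' simplexS d)) := by
  classical
  have hdpos : (0:ℝ) < d := by exact_mod_cast hd
  have huni : (fun _ : Fin d => (d:ℝ)⁻¹) ∈ simplexS d := by
    constructor
    · intro i
      positivity
    · rw [Finset.sum_const, Finset.card_univ, Fintype.card_fin, nsmul_eq_mul]
      field_simp
  have hsimp_ne : (simplexS d).Nonempty := ⟨_, huni⟩
  have hSne : ((fun α => Phi C α f) '' simplexS d).Nonempty := hsimp_ne.image _
  set m := sInf ((fun α => Phi C α f) '' simplexS d) with hmdef
  have hi₀ : ∃ i : Fin d, True := ⟨⟨0, hd⟩, trivial⟩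
  obtain ⟨i₀, -⟩ := hi₀
  -- positive lower bound for Phi on the simplex
  obtain ⟨c₀, hc₀pos, hc₀le⟩ : ∃ c : ℝ, 0 < c ∧
      ∀ i j : Fin d, c ≤ Real.exp (-(f i + f j + C i j) / 2) := by
    refine ⟨Finset.univ.inf' ⟨i₀, Finset.mem_univ _⟩
      (fun i => Finset.univ.inf' ⟨i₀, Finset.mem_univ _⟩
        (fun j => Real.exp (-(f i + f j + C i j) / 2))), ?_, ?_⟩
    · refine (Finset.lt_inf'_iff _).2 ?_
      intro i _
      refine (Finset.lt_inf'_iff _).2 ?_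
      intro j _
      exact Real.exp_pos _
    · intro i j
      refine le_trans (Finset.inf'_le _ (Finset.mem_univ i)) ?_
      exact Finset.inf'_le _ (Finset.mem_univ j)
  have hPhi_ge : ∀ β ∈ simplexS d, c₀ ≤ Phi C β f := by
    rintro β ⟨hβ0, hβ1⟩
    have step : ∀ i ∈ Finset.univ, ∀ j ∈ Finset.univ,
        β i * β j * c₀ ≤ β i * β j * Real.exp (-(f i + f j + C i j) / 2) := by
      intro i _ j _
      exact mul_le_mul_of_nonneg_left (hc₀le i j) (mul_nonneg (hβ0 i) (hβ0 j))
    have base : ∑ i, ∑ j, β i * β j * c₀ = c₀ := by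
      have h2 : ∀ i ∈ Finset.univ, ∑ j, β i * β j * c₀ = β i * c₀ := by
        intro i _
        have h3 : ∀ j ∈ Finset.univ, β i * β j * c₀ = β j * (β i * c₀) := by
          intro j _; ring
        rw [Finset.sum_congr rfl h3, ← Finset.sum_mul, hβ1, one_mul]
      rw [Finset.sum_congr rfl h2, ← Finset.sum_mul, hβ1, one_mul]
    calc c₀ = ∑ i, ∑ j, β i * β j * c₀ := base.symm
      _ ≤ ∑ i, ∑ j, β i * β j * Real.exp (-(f i + f j + C i j) / 2) :=
          Finset.sum_le_sum fun i hi => Finset.sum_le_sum fun j hj => step i hi j hj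
      _ = Phi C β f := rfl
  have hPhinn : ∀ β ∈ simplexS d, 0 ≤ Phi C β f := by
    rintro β ⟨hβ0, hβ1⟩
    apply Finset.sum_nonneg
    intro i _
    apply Finset.sum_nonneg
    intro j _
    have := hβ0 i; have := hβ0 j
    have := (Real.exp_pos (-(f i + f j + C i j) / 2)).le
    positivity
  have hmpos : 0 < m :=
    lt_of_lt_of_le hc₀pos (le_csInf hSne (by rintro v ⟨β, hβ, rfl⟩; exact hPhi_ge β hβ))
  have hm_le : ∀ β ∈ simplexS d, m ≤ Phi C β f := by
    intro β hβ
    exact csInf_le ⟨0, by rintro v ⟨γ, hγ, rfl⟩; exact hPhinn γ hγ⟩ ⟨β, hβ, rfl⟩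
  -- minimizer of Phi
  have hPhicont : Continuous (fun α : Fin d → ℝ => Phi C α f) := by
    unfold Phi
    apply continuous_finset_sum
    intro i _
    apply continuous_finset_sum
    intro j _
    fun_prop
  obtain ⟨βs, hβsmem, hβsmin⟩ :=
    (isCompact_stdSimplex ℝ (Fin d)).exists_isMinOn hsimp_ne hPhicont.continuousOn
  have hβseq : Phi C βs f = m := by
    apply le_antisymm
    · apply le_csInf hSne
      rintro v ⟨γ, hγ, rfl⟩
      exact hβsmin hγ
    · exact hm_le βs hβsmem
  -- upper bound for every element
  have hub : ∀ v ∈ (fun α => (∑ i, α i * f i) - Omega C α) '' simplexS d,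
      v ≤ -Real.log m := by
    rintro v ⟨α, hα, rfl⟩
    exact upper_bound C hCsym hCdiag f m hmpos hm_le α hα
  have hEne : ((fun α => (∑ i, α i * f i) - Omega C α) '' simplexS d).Nonempty :=
    hsimp_ne.image _
  apply le_antisymm
  · exact csSup_le hEne hub
  · have h8 : -Real.log m ≤ (∑ i, βs i * f i) - Omega C βs := by
      rw [← hβseq]
      exact lower_bound C f βs hβsmem.1 hβsmem.2
    exact h8.trans (le_csSup ⟨-Real.log m, hub⟩ ⟨βs, hβsmem, rfl⟩)
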